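/- (Lemma 3, first part.) Let 0 < ρ < 1, Δ₁, Δ₂ ∈ (0,1), δ_i = 1 − Δ_i, c = ρ − √(δ₁δ₂), and assume Δ₁Δ₂ − c² > 0. Let ε = ε_Λ(√( δ₁(Δ₁Δ₂ − c²)/(1−ρ²) )). If ε < 1/2, then the L¹ (variation) distance between the mixture density f_{X̄,Ȳ}(x,y) = ∑_{a∈Λ} D_{Λ,√δ₁}(a)·f_Z(x − a, y − √(δ₂/δ₁)·a) and the bivariate Gaussian density f_{X,Y} with unit variances and correlation ρ satisfies ∫_{ℝ²} |f_{X̄,Ȳ}(x,y) − f_{X,Y}(x,y)| dx dy ≤ 4ε. -/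

import Mathlib

open Real

/-- The centered Gaussian density with standard deviation `σ`. -/
noncomputable def gpdf (σ x : ℝ) : ℝ :=
  (1 / (Real.sqrt (2 * Real.pi) * σ)) * Real.exp (-(x ^ 2) / (2 * σ ^ 2))

/-- The discrete Gaussian distribution over the lattice `Λ = bℤ` with parameter `σ`,
evaluated at the lattice point `b * k`. -/
noncomputable def dgauss (b σ : ℝ) (k : ℤ) : ℝ :=
  gpdf σ (b * k) / ∑' j : ℤ, gpdf σ (b * j)

/-- The flatness factor of the lattice `Λ = bℤ` at parameter `σ`. -/
noncomputable def flatness (b σ : ℝ) : ℝ :=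
  ⨆ x : ℝ, |b * (∑' k : ℤ, gpdf σ (x - b * k)) - 1|

/-- The bivariate Gaussian density with unit variances and correlation `ρ`. -/
noncomputable def fXY (ρ x y : ℝ) : ℝ :=
  (1 / (2 * Real.pi * Real.sqrt (1 - ρ ^ 2))) *
    Real.exp (-(x ^ 2 + y ^ 2 - 2 * ρ * x * y) / (2 * (1 - ρ ^ 2)))

/-- The centered bivariate Gaussian density with covariance matrix `[[Δ₁, c], [c, Δ₂]]`. -/
noncomputable def fZ (Δ₁ Δ₂ c z₁ z₂ : ℝ) : ℝ :=
  (1 / (2 * Real.pi * Real.sqrt (Δ₁ * Δ₂ - c ^ 2))) *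
    Real.exp (-(Δ₂ * z₁ ^ 2 + Δ₁ * z₂ ^ 2 - 2 * c * z₁ * z₂) / (2 * (Δ₁ * Δ₂ - c ^ 2)))

/-- The density of `(X̄, Ȳ) = (X̄' + Z₁, √(δ₂/δ₁) X̄' + Z₂)` where `X̄' ~ D_{Λ,√δ₁}`,
`Λ = bℤ`, and `(Z₁, Z₂)` has density `f_Z` with covariance `[[Δ₁, c], [c, Δ₂]]`,
`c = ρ − √(δ₁δ₂)`. -/
noncomputable def fXbarYbar2 (ρ Δ₁ Δ₂ b x y : ℝ) : ℝ :=
  ∑' k : ℤ, dgauss b (Real.sqrt (1 - Δ₁)) k *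
    fZ Δ₁ Δ₂ (ρ - Real.sqrt ((1 - Δ₁) * (1 - Δ₂))) (x - b * k)
      (y - Real.sqrt ((1 - Δ₂) / (1 - Δ₁)) * (b * k))

/-! ### Auxiliary lemmas -/

open MeasureTheory

lemma gpdf_pos {σ : ℝ} (hσ : 0 < σ) (x : ℝ) : 0 < gpdf σ x := by
  unfold gpdf
  have := Real.sqrt_pos.mpr (by positivity : (0:ℝ) < 2 * Real.pi)
  positivity

lemma gpdf_nonneg {σ : ℝ} (hσ : 0 < σ) (x : ℝ) : 0 ≤ gpdf σ x := (gpdf_pos hσ x).le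

lemma continuous_gpdf (σ : ℝ) : Continuous (gpdf σ) := by unfold gpdf; fun_prop

lemma gpdf_neg (σ x : ℝ) : gpdf σ (-x) = gpdf σ x := by unfold gpdf; rw [neg_pow]; norm_num

lemma gpdf_anti {σ : ℝ} (hσ : 0 < σ) {x y : ℝ} (h : y ^ 2 ≤ x ^ 2) : gpdf σ x ≤ gpdf σ y := by
  unfold gpdf
  have h1 : (0:ℝ) < Real.sqrt (2 * Real.pi) * σ := by
    have := Real.sqrt_pos.mpr (by positivity : (0:ℝ) < 2 * Real.pi); positivity
  gcongr

lemma integrable_gpdf {σ : ℝ} (hσ : 0 < σ) : Integrable (gpdf σ) := by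
  have h : gpdf σ = fun x => (1 / (Real.sqrt (2 * Real.pi) * σ)) *
      Real.exp (-(1/(2*σ^2)) * x ^ 2) := by
    funext x; unfold gpdf; ring_nf
  rw [h]
  exact ((integrable_exp_neg_mul_sq (by positivity)).const_mul _)

lemma integral_gpdf {σ : ℝ} (hσ : 0 < σ) : ∫ x, gpdf σ x = 1 := by
  have h : gpdf σ = fun x => (1 / (Real.sqrt (2 * Real.pi) * σ)) *
      Real.exp (-(1/(2*σ^2)) * x ^ 2) := by
    funext x; unfold gpdf; ring_nf
  rw [h, MeasureTheory.integral_const_mul, integral_gaussian]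
  have : Real.sqrt (π / (1/(2*σ^2))) = Real.sqrt (2*π) * σ := by
    rw [show π / (1/(2*σ^2)) = (2*π) * σ^2 by field_simp, Real.sqrt_mul (by positivity),
      Real.sqrt_sq hσ.le]
  rw [this]
  have h2 : (0:ℝ) < Real.sqrt (2 * Real.pi) * σ := by
    have := Real.sqrt_pos.mpr (by positivity : (0:ℝ) < 2 * Real.pi); positivity
  field_simp

lemma summable_H {a C : ℝ} (ha : 0 < a) :
    Summable (fun j : ℤ => C * Real.exp (-(a * (max (|(j:ℝ)| - 1) 0) ^ 2))) := by
  apply Summable.mul_left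
  have key : Summable (fun n : ℕ => Real.exp (-(a * (max ((n:ℝ) - 1) 0) ^ 2))) := by
    refine Summable.of_nonneg_of_le (fun n => (Real.exp_pos _).le) ?_
      (((summable_geometric_of_lt_one (Real.exp_pos (-a)).le
        (Real.exp_lt_one_iff.mpr (by linarith : -a < 0))).mul_left (Real.exp (2*a))) :
        Summable (fun n : ℕ => Real.exp (2*a) * (Real.exp (-a))^n))
    intro n
    rw [← Real.exp_nat_mul, ← Real.exp_add]
    apply Real.exp_le_exp.mpr
    rcases Nat.eq_zero_or_pos n with h0 | h1
    · subst h0; simp; nlinarith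
    · have hn : (1:ℝ) ≤ (n:ℝ) := by exact_mod_cast h1
      have hmax : max ((n:ℝ) - 1) 0 = (n:ℝ) - 1 := max_eq_left (by linarith)
      rw [hmax]; nlinarith [mul_nonneg ha.le (sq_nonneg ((n:ℝ)-3/2))]
  apply Summable.of_nat_of_neg <;> simpa using key

lemma gpdf_shift_le {σ b : ℝ} (hσ : 0 < σ) (hb : 0 < b) (x : ℝ) (k : ℤ) :
    gpdf σ (x - b * k) ≤ (1 / (Real.sqrt (2 * Real.pi) * σ)) *
      Real.exp (-((b^2/(2*σ^2)) * (max (|((k - round (x / b) : ℤ) : ℝ)| - 1) 0) ^ 2)) := by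
  have key : (b * max (|((k - round (x / b) : ℤ) : ℝ)| - 1) 0) ^ 2 ≤ (x - b * k) ^ 2 := by
    set n := round (x / b) with hn
    have h1 : |x / b - n| ≤ 1 / 2 := abs_sub_round (x / b)
    rcases le_or_gt (|((k - n : ℤ) : ℝ)| - 1) 0 with h | h
    · rw [max_eq_right h]; simpa using sq_nonneg (x - b*k)
    · rw [max_eq_left h.le]
      have h2 : |((k - n : ℤ) : ℝ)| - 1 ≤ |x / b - k| := by
        have h3 : |((k - n : ℤ) : ℝ)| ≤ |x/b - k| + |x / b - n| := by
          push_cast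
          calc |(k:ℝ) - n| = |(x/b - n) - (x/b - k)| := by ring_nf
          _ ≤ |x/b - n| + |x/b - k| := abs_sub _ _
          _ = _ := by ring
        linarith
      have h4 : b * (|((k - n : ℤ) : ℝ)| - 1) ≤ |x - b * k| := by
        have : |x - b * k| = b * |x/b - k| := by
          have hx : x - b * k = b * (x/b - k) := by field_simp
          rw [hx, abs_mul, abs_of_pos hb]
        rw [this]
        exact mul_le_mul_of_nonneg_left h2 hb.le
      calc (b * (|((k - n : ℤ) : ℝ)| - 1))^2 ≤ |x - b*k|^2 := by
            apply pow_le_pow_left₀ (by positivity) h4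
      _ = (x - b*k)^2 := sq_abs _
  have := gpdf_anti hσ (y := b * max (|((k - round (x / b) : ℤ) : ℝ)| - 1) 0) (x := x - b * k) key
  refine this.trans_eq ?_
  unfold gpdf
  congr 1
  rw [mul_pow]
  field_simp

lemma summable_gpdf_shift {σ b : ℝ} (hσ : 0 < σ) (hb : 0 < b) (x : ℝ) :
    Summable (fun k : ℤ => gpdf σ (x - b * k)) := by
  set H : ℤ → ℝ := fun j => (1 / (Real.sqrt (2 * Real.pi) * σ)) *
      Real.exp (-((b^2/(2*σ^2)) * (max (|(j : ℝ)| - 1) 0) ^ 2)) with hH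
  have hHsum : Summable H := summable_H (by positivity)
  have hcomp : Summable (fun k : ℤ => H (k - round (x / b))) :=
    ((Equiv.subRight (round (x / b))).summable_iff (f := H)).mpr hHsum
  exact Summable.of_nonneg_of_le (fun k => gpdf_nonneg hσ _)
    (fun k => gpdf_shift_le hσ hb x k) hcomp

lemma theta_bounded {σ b : ℝ} (hσ : 0 < σ) (hb : 0 < b) :
    ∃ M : ℝ, ∀ x : ℝ, (∑' k : ℤ, gpdf σ (x - b * k)) ≤ M := by
  set H : ℤ → ℝ := fun j => (1 / (Real.sqrt (2 * Real.pi) * σ)) *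
      Real.exp (-((b^2/(2*σ^2)) * (max (|(j : ℝ)| - 1) 0) ^ 2)) with hH
  have hHsum : Summable H := summable_H (by positivity)
  refine ⟨∑' j : ℤ, H j, fun x => ?_⟩
  have hcomp : Summable (fun k : ℤ => H (k - round (x / b))) :=
    ((Equiv.subRight (round (x / b))).summable_iff (f := H)).mpr hHsum
  calc (∑' k : ℤ, gpdf σ (x - b * k)) ≤ ∑' k : ℤ, H (k - round (x / b)) :=
        Summable.tsum_le_tsum (fun k => gpdf_shift_le hσ hb x k) (summable_gpdf_shift hσ hb x) hcomp
  _ = ∑' j : ℤ, H j := (Equiv.subRight (round (x / b))).tsum_eq (f := H)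

lemma abs_theta_sub_one_le {σ b : ℝ} (hσ : 0 < σ) (hb : 0 < b) (u : ℝ) :
    |b * (∑' k : ℤ, gpdf σ (u - b * k)) - 1| ≤ flatness b σ := by
  obtain ⟨M, hM⟩ := theta_bounded hσ hb
  refine le_ciSup (f := fun x : ℝ => |b * (∑' k : ℤ, gpdf σ (x - b * k)) - 1|) ⟨b * M + 1, ?_⟩ u
  rintro y ⟨x, rfl⟩
  have h1 : 0 ≤ ∑' k : ℤ, gpdf σ (x - b * k) := tsum_nonneg fun k => gpdf_nonneg hσ _
  have h2 : b * (∑' k : ℤ, gpdf σ (x - b * k)) ≤ b * M := mul_le_mul_of_nonneg_left (hM x) hb.le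
  simp only []
  rw [abs_le]
  constructor <;> nlinarith

lemma flatness_nonneg {σ b : ℝ} (hσ : 0 < σ) (hb : 0 < b) : 0 ≤ flatness b σ :=
  (abs_nonneg _).trans (abs_theta_sub_one_le hσ hb 0)

/-- Conditional mean of the lattice component given `(x, y)`. -/
noncomputable def mAux (ρ s₁ s₂ x y : ℝ) : ℝ :=
  ((s₁^2 * (1 - s₂^2) - (ρ - s₁*s₂) * (s₁*s₂)) * x
    + ((s₁*s₂) * (1 - s₁^2) - (ρ - s₁*s₂) * s₁^2) * y) / (1 - ρ^2)

lemma key_identity' (ρ s₁ s₂ x y t : ℝ) (hs₁ : 0 < s₁) (hρ2 : 0 < 1 - ρ ^ 2)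
    (hq : 0 < (1 - s₁^2) * (1 - s₂^2) - (ρ - s₁*s₂) ^ 2) :
    gpdf s₁ t * fZ (1 - s₁^2) (1 - s₂^2) (ρ - s₁*s₂) (x - t) (y - (s₂/s₁) * t)
      = fXY ρ x y *
        gpdf (s₁ * Real.sqrt (((1 - s₁^2) * (1 - s₂^2) - (ρ - s₁*s₂) ^ 2) / (1 - ρ^2)))
          (mAux ρ s₁ s₂ x y - t) := by
  set q : ℝ := (1 - s₁^2) * (1 - s₂^2) - (ρ - s₁*s₂) ^ 2 with hqdef
  set w : ℝ := Real.sqrt (q / (1 - ρ^2)) with hwdef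
  have hw2 : w ^ 2 = q / (1 - ρ^2) := Real.sq_sqrt (by positivity)
  have hwpos : 0 < w := Real.sqrt_pos.mpr (by positivity)
  have hsq : Real.sqrt q = Real.sqrt (1 - ρ^2) * w := by
    rw [hwdef, ← Real.sqrt_mul hρ2.le, mul_div_cancel₀ _ hρ2.ne']
  have h2π : (0:ℝ) < Real.sqrt (2 * Real.pi) := Real.sqrt_pos.mpr (by positivity)
  have hρs : (0:ℝ) < Real.sqrt (1 - ρ^2) := Real.sqrt_pos.mpr hρ2
  unfold gpdf fZ fXY mAux
  rw [hsq]
  rw [mul_mul_mul_comm, mul_mul_mul_comm (1 / (2 * π * Real.sqrt (1 - ρ^2)))]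
  congr 1
  · field_simp
  · rw [← Real.exp_add, ← Real.exp_add]
    congr 1
    have hsw : (s₁ * w) ^ 2 = s₁^2 * q / (1 - ρ^2) := by rw [mul_pow, hw2]; ring
    rw [hsw]
    have hs₁' : s₁ ≠ 0 := hs₁.ne'
    have hq' : q ≠ 0 := hq.ne'
    have hρ2' : (1 - ρ^2) ≠ 0 := hρ2.ne'
    rw [hqdef]
    have hq2 : (1 - s₁^2) * (1 - s₂^2) - (ρ - s₁*s₂) ^ 2 ≠ 0 := hq'
    have hq3 : (1 - s₂ ^ 2) * (1 - s₁ ^ 2) - (ρ - s₁ * s₂) ^ 2 ≠ 0 := by rw [mul_comm]; exact hq2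
    field_simp
    ring

lemma lintegral_gpdf {σ : ℝ} (hσ : 0 < σ) : ∫⁻ x, ENNReal.ofReal (gpdf σ x) = 1 := by
  rw [← ofReal_integral_eq_lintegral_ofReal (integrable_gpdf hσ)
    (Filter.Eventually.of_forall (gpdf_nonneg hσ)), integral_gpdf hσ, ENNReal.ofReal_one]

lemma lintegral_gpdf_prod {σ₁ σ₂ : ℝ} (h₁ : 0 < σ₁) (h₂ : 0 < σ₂) (r u v : ℝ) :
    ∫⁻ p : ℝ × ℝ, ENNReal.ofReal (gpdf σ₁ (p.1 - u) * gpdf σ₂ (p.2 - (r * p.1 + v))) = 1 := by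
  rw [Measure.volume_eq_prod, lintegral_prod]
  · have key : ∀ x : ℝ, ∫⁻ y, ENNReal.ofReal (gpdf σ₁ (x - u) * gpdf σ₂ (y - (r * x + v)))
        = ENNReal.ofReal (gpdf σ₁ (x - u)) := by
      intro x
      simp_rw [ENNReal.ofReal_mul (gpdf_nonneg h₁ _)]
      rw [lintegral_const_mul' _ _ ENNReal.ofReal_ne_top,
        lintegral_sub_right_eq_self (fun y => ENNReal.ofReal (gpdf σ₂ y)) (r * x + v),
        lintegral_gpdf h₂, mul_one]
    simp_rw [key]
    rw [lintegral_sub_right_eq_self (fun x => ENNReal.ofReal (gpdf σ₁ x)) u, lintegral_gpdf h₁]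
  · apply Measurable.aemeasurable
    apply ENNReal.measurable_ofReal.comp
    exact (((continuous_gpdf σ₁).comp (by fun_prop)).mul
      ((continuous_gpdf σ₂).comp (by fun_prop))).measurable

lemma fZ_eq_prod {Δ₁ Δ₂ c : ℝ} (h1 : 0 < Δ₁) (hq : 0 < Δ₁ * Δ₂ - c ^ 2) (z₁ z₂ : ℝ) :
    fZ Δ₁ Δ₂ c z₁ z₂ = gpdf (Real.sqrt Δ₁) z₁ *
      gpdf (Real.sqrt ((Δ₁ * Δ₂ - c ^ 2) / Δ₁)) (z₂ - (c / Δ₁) * z₁) := by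
  set q : ℝ := Δ₁ * Δ₂ - c ^ 2 with hqdef
  have hs1 : Real.sqrt Δ₁ ^ 2 = Δ₁ := Real.sq_sqrt h1.le
  have hv2 : Real.sqrt (q / Δ₁) ^ 2 = q / Δ₁ := Real.sq_sqrt (by positivity)
  have hsq : Real.sqrt q = Real.sqrt Δ₁ * Real.sqrt (q / Δ₁) := by
    rw [← Real.sqrt_mul h1.le, mul_div_cancel₀ _ h1.ne']
  have h2π : Real.sqrt (2 * π) * Real.sqrt (2 * π) = 2 * π :=
    Real.mul_self_sqrt (by positivity)
  have hπ : (0:ℝ) < π := Real.pi_pos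
  have hs1p : (0:ℝ) < Real.sqrt Δ₁ := Real.sqrt_pos.mpr h1
  have hvp : (0:ℝ) < Real.sqrt (q / Δ₁) := Real.sqrt_pos.mpr (by positivity)
  have h2πp : (0:ℝ) < Real.sqrt (2 * π) := Real.sqrt_pos.mpr (by positivity)
  have hden : (Real.sqrt (2 * π) * Real.sqrt Δ₁) * (Real.sqrt (2 * π) * Real.sqrt (q / Δ₁))
      = 2 * π * Real.sqrt q := by
    calc (Real.sqrt (2 * π) * Real.sqrt Δ₁) * (Real.sqrt (2 * π) * Real.sqrt (q / Δ₁))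
        = (Real.sqrt (2 * π) * Real.sqrt (2 * π)) * (Real.sqrt Δ₁ * Real.sqrt (q / Δ₁)) := by ring
    _ = 2 * π * Real.sqrt q := by rw [h2π, ← hsq]
  have hconst : 1 / (2 * π * Real.sqrt q)
      = (1 / (Real.sqrt (2 * π) * Real.sqrt Δ₁)) *
        (1 / (Real.sqrt (2 * π) * Real.sqrt (q / Δ₁))) := by
    rw [div_mul_div_comm, one_mul, hden]
  have hΔ₂ : Δ₂ = (q + c ^ 2) / Δ₁ := by rw [hqdef]; field_simp; ring
  have hexp : -(Δ₂ * z₁ ^ 2 + Δ₁ * z₂ ^ 2 - 2 * c * z₁ * z₂) / (2 * q)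
      = -(z₁ ^ 2) / (2 * Δ₁) + -((z₂ - (c / Δ₁) * z₁) ^ 2) / (2 * (q / Δ₁)) := by
    rw [hΔ₂]
    field_simp
    ring
  unfold fZ gpdf
  rw [← hqdef, hconst, hs1, hv2, hexp, Real.exp_add]
  ring

lemma lintegral_fZ_shift {Δ₁ Δ₂ c : ℝ} (h1 : 0 < Δ₁) (hq : 0 < Δ₁ * Δ₂ - c ^ 2) (u v : ℝ) :
    ∫⁻ p : ℝ × ℝ, ENNReal.ofReal (fZ Δ₁ Δ₂ c (p.1 - u) (p.2 - v)) = 1 := by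
  have key : ∀ p : ℝ × ℝ, fZ Δ₁ Δ₂ c (p.1 - u) (p.2 - v)
      = gpdf (Real.sqrt Δ₁) (p.1 - u) *
        gpdf (Real.sqrt ((Δ₁ * Δ₂ - c ^ 2) / Δ₁))
          (p.2 - ((c / Δ₁) * p.1 + (v - (c / Δ₁) * u))) := by
    intro p
    rw [fZ_eq_prod h1 hq]
    congr 2
    ring
  simp_rw [key]
  exact lintegral_gpdf_prod (Real.sqrt_pos.mpr h1) (Real.sqrt_pos.mpr (by positivity)) _ _ _

lemma fZ_nonneg {Δ₁ Δ₂ c : ℝ} (hq : 0 < Δ₁ * Δ₂ - c ^ 2) (z₁ z₂ : ℝ) :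
    0 ≤ fZ Δ₁ Δ₂ c z₁ z₂ := by
  have h1 : (0:ℝ) < Real.sqrt (Δ₁ * Δ₂ - c ^ 2) := Real.sqrt_pos.mpr hq
  have hπ : (0:ℝ) < π := Real.pi_pos
  unfold fZ
  positivity

lemma fXY_eq_prod {ρ : ℝ} (hρ2 : 0 < 1 - ρ ^ 2) (x y : ℝ) :
    fXY ρ x y = gpdf 1 x * gpdf (Real.sqrt (1 - ρ ^ 2)) (y - ρ * x) := by
  have hv2 : Real.sqrt (1 - ρ ^ 2) ^ 2 = 1 - ρ ^ 2 := Real.sq_sqrt hρ2.le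
  have h2π : Real.sqrt (2 * π) * Real.sqrt (2 * π) = 2 * π :=
    Real.mul_self_sqrt (by positivity)
  have hπ : (0:ℝ) < π := Real.pi_pos
  have hvp : (0:ℝ) < Real.sqrt (1 - ρ ^ 2) := Real.sqrt_pos.mpr hρ2
  have h2πp : (0:ℝ) < Real.sqrt (2 * π) := Real.sqrt_pos.mpr (by positivity)
  have hden : (Real.sqrt (2 * π) * 1) * (Real.sqrt (2 * π) * Real.sqrt (1 - ρ ^ 2))
      = 2 * π * Real.sqrt (1 - ρ ^ 2) := by
    calc (Real.sqrt (2 * π) * 1) * (Real.sqrt (2 * π) * Real.sqrt (1 - ρ ^ 2))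
        = (Real.sqrt (2 * π) * Real.sqrt (2 * π)) * Real.sqrt (1 - ρ ^ 2) := by ring
    _ = _ := by rw [h2π]
  have hconst : 1 / (2 * π * Real.sqrt (1 - ρ ^ 2))
      = (1 / (Real.sqrt (2 * π) * 1)) *
        (1 / (Real.sqrt (2 * π) * Real.sqrt (1 - ρ ^ 2))) := by
    rw [div_mul_div_comm, one_mul, hden]
  have hexp : -(x ^ 2 + y ^ 2 - 2 * ρ * x * y) / (2 * (1 - ρ ^ 2))
      = -(x ^ 2) / (2 * 1 ^ 2) + -((y - ρ * x) ^ 2) / (2 * (1 - ρ ^ 2)) := by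
    field_simp
    ring
  unfold fXY gpdf
  rw [hconst, hv2, hexp, Real.exp_add]
  ring

lemma lintegral_fXY {ρ : ℝ} (hρ2 : 0 < 1 - ρ ^ 2) :
    ∫⁻ p : ℝ × ℝ, ENNReal.ofReal (fXY ρ p.1 p.2) = 1 := by
  have key : ∀ p : ℝ × ℝ, fXY ρ p.1 p.2
      = gpdf 1 (p.1 - 0) * gpdf (Real.sqrt (1 - ρ ^ 2)) (p.2 - (ρ * p.1 + 0)) := by
    intro p
    rw [fXY_eq_prod hρ2]
    congr 2 <;> ring
  simp_rw [key]
  exact lintegral_gpdf_prod one_pos (Real.sqrt_pos.mpr hρ2) _ _ _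

lemma continuous_fXY (ρ : ℝ) : Continuous (fun p : ℝ × ℝ => fXY ρ p.1 p.2) := by
  unfold fXY; fun_prop

lemma fXY_nonneg {ρ : ℝ} (hρ2 : 0 < 1 - ρ ^ 2) (x y : ℝ) : 0 ≤ fXY ρ x y := by
  have hvp : (0:ℝ) < Real.sqrt (1 - ρ ^ 2) := Real.sqrt_pos.mpr hρ2
  have hπ : (0:ℝ) < π := Real.pi_pos
  unfold fXY
  positivity

lemma integrable_fXY {ρ : ℝ} (hρ2 : 0 < 1 - ρ ^ 2) :
    Integrable (fun p : ℝ × ℝ => fXY ρ p.1 p.2) := by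
  refine ⟨(continuous_fXY ρ).aestronglyMeasurable, ?_⟩
  have h0 : (0 : ℝ × ℝ → ℝ) ≤ᵐ[volume] (fun p : ℝ × ℝ => fXY ρ p.1 p.2) :=
    Filter.Eventually.of_forall (fun p => fXY_nonneg hρ2 p.1 p.2)
  rw [hasFiniteIntegral_iff_ofReal h0, lintegral_fXY hρ2]
  exact ENNReal.one_lt_top

lemma integral_fXY {ρ : ℝ} (hρ2 : 0 < 1 - ρ ^ 2) :
    ∫ p : ℝ × ℝ, fXY ρ p.1 p.2 = 1 := by
  have h0 : (0 : ℝ × ℝ → ℝ) ≤ᵐ[volume] (fun p : ℝ × ℝ => fXY ρ p.1 p.2) :=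
    Filter.Eventually.of_forall (fun p => fXY_nonneg hρ2 p.1 p.2)
  rw [integral_eq_lintegral_of_nonneg_ae h0
    (continuous_fXY ρ).aestronglyMeasurable, lintegral_fXY hρ2, ENNReal.toReal_one]

set_option maxHeartbeats 2000000 in
/-- Lemma 3, first part: with `δᵢ = 1 − Δᵢ`, `c = ρ − √(δ₁δ₂)`,
`Δ₁Δ₂ − c² > 0` and `ε = ε_Λ(√(δ₁(Δ₁Δ₂ − c²)/(1−ρ²))) < 1/2`, the L¹ (variation) distance
between the mixture density `f_{X̄,Ȳ}` and the bivariate Gaussian density `f_{X,Y}` is at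
most `4ε`. -/
theorem region2_variation_distance_le (ρ Δ₁ Δ₂ b : ℝ) (hb : 0 < b) (hρ0 : 0 < ρ)
    (hρ1 : ρ < 1) (hΔ₁0 : 0 < Δ₁) (hΔ₁1 : Δ₁ < 1) (hΔ₂0 : 0 < Δ₂) (hΔ₂1 : Δ₂ < 1)
    (hpos : 0 < Δ₁ * Δ₂ - (ρ - Real.sqrt ((1 - Δ₁) * (1 - Δ₂))) ^ 2)
    (hε : flatness b (Real.sqrt ((1 - Δ₁) *
        (Δ₁ * Δ₂ - (ρ - Real.sqrt ((1 - Δ₁) * (1 - Δ₂))) ^ 2) / (1 - ρ ^ 2))) < 1 / 2) :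
    ∫ p : ℝ × ℝ, |fXbarYbar2 ρ Δ₁ Δ₂ b p.1 p.2 - fXY ρ p.1 p.2| ≤
      4 * flatness b (Real.sqrt ((1 - Δ₁) *
        (Δ₁ * Δ₂ - (ρ - Real.sqrt ((1 - Δ₁) * (1 - Δ₂))) ^ 2) / (1 - ρ ^ 2))) := by
  have hδ₁ : (0:ℝ) < 1 - Δ₁ := by linarith
  have hδ₂ : (0:ℝ) < 1 - Δ₂ := by linarith
  have hρ2 : (0:ℝ) < 1 - ρ ^ 2 := by nlinarith
  set s₁ : ℝ := Real.sqrt (1 - Δ₁) with hs₁def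
  set s₂ : ℝ := Real.sqrt (1 - Δ₂) with hs₂def
  have hs₁pos : 0 < s₁ := Real.sqrt_pos.mpr hδ₁
  have hs₂pos : 0 < s₂ := Real.sqrt_pos.mpr hδ₂
  have hs₁sq : s₁ ^ 2 = 1 - Δ₁ := Real.sq_sqrt hδ₁.le
  have hs₂sq : s₂ ^ 2 = 1 - Δ₂ := Real.sq_sqrt hδ₂.le
  have hΔ₁s : Δ₁ = 1 - s₁ ^ 2 := by rw [hs₁sq]; ring
  have hΔ₂s : Δ₂ = 1 - s₂ ^ 2 := by rw [hs₂sq]; ring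
  have hc : Real.sqrt ((1 - Δ₁) * (1 - Δ₂)) = s₁ * s₂ := Real.sqrt_mul hδ₁.le _
  have hα : Real.sqrt ((1 - Δ₂) / (1 - Δ₁)) = s₂ / s₁ := Real.sqrt_div hδ₂.le _
  rw [hc] at hpos
  have hqs : 0 < (1 - s₁^2) * (1 - s₂^2) - (ρ - s₁*s₂) ^ 2 := by
    rw [← hΔ₁s, ← hΔ₂s]; exact hpos
  -- the effective deviation
  have hσeq : Real.sqrt ((1 - Δ₁) *
      (Δ₁ * Δ₂ - (ρ - Real.sqrt ((1 - Δ₁) * (1 - Δ₂))) ^ 2) / (1 - ρ ^ 2))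
      = s₁ * Real.sqrt (((1 - s₁^2) * (1 - s₂^2) - (ρ - s₁*s₂) ^ 2) / (1 - ρ ^ 2)) := by
    rw [hc, mul_div_assoc, ← hs₁sq, Real.sqrt_mul (sq_nonneg s₁), Real.sqrt_sq hs₁pos.le,
      hΔ₁s, hΔ₂s]
  rw [hσeq] at hε ⊢
  set σ : ℝ := s₁ * Real.sqrt (((1 - s₁^2) * (1 - s₂^2) - (ρ - s₁*s₂) ^ 2) / (1 - ρ ^ 2))
    with hσdef
  have hσpos : 0 < σ := by
    have : 0 < Real.sqrt (((1 - s₁^2) * (1 - s₂^2) - (ρ - s₁*s₂) ^ 2) / (1 - ρ ^ 2)) :=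
      Real.sqrt_pos.mpr (by positivity)
    positivity
  set ε : ℝ := flatness b σ with hεdef
  have hεnn : 0 ≤ ε := flatness_nonneg hσpos hb
  -- flatness bounds on the periodized Gaussian
  have hT : ∀ u : ℝ, 1 - ε ≤ b * (∑' k : ℤ, gpdf σ (u - b * k)) ∧
      b * (∑' k : ℤ, gpdf σ (u - b * k)) ≤ 1 + ε := by
    intro u
    have := abs_le.mp (abs_theta_sub_one_le hσpos hb u)
    constructor <;> linarith [this.1, this.2]
  -- the denominator
  set Θ : ℝ := ∑' j : ℤ, gpdf s₁ (b * (j:ℤ)) with hΘdef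
  have hsumΘ : Summable (fun j : ℤ => gpdf s₁ (b * (j:ℤ))) := by
    refine (summable_gpdf_shift hs₁pos hb 0).congr (fun j => ?_)
    rw [zero_sub, gpdf_neg]
  have hΘpos : 0 < Θ := by
    refine Summable.tsum_pos hsumΘ (fun j => gpdf_nonneg hs₁pos _) 0 (gpdf_pos hs₁pos _)
  have hbΘpos : 0 < b * Θ := by positivity
  -- the key pointwise Gaussian identity
  have hkey : ∀ (x y : ℝ) (k : ℤ),
      gpdf s₁ (b * k) * fZ Δ₁ Δ₂ (ρ - s₁ * s₂) (x - b * k) (y - s₂ / s₁ * (b * k))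
        = fXY ρ x y * gpdf σ (mAux ρ s₁ s₂ x y - b * k) := by
    intro x y k
    rw [hΔ₁s, hΔ₂s]
    exact key_identity' ρ s₁ s₂ x y (b * k) hs₁pos hρ2 hqs
  -- the mixture density in closed form
  have hbar : ∀ x y : ℝ, fXbarYbar2 ρ Δ₁ Δ₂ b x y
      = fXY ρ x y * ((b * ∑' k : ℤ, gpdf σ (mAux ρ s₁ s₂ x y - b * k)) / (b * Θ)) := by
    intro x y
    unfold fXbarYbar2 dgauss
    rw [← hs₁def, hc, hα, ← hΘdef]
    have hterm : ∀ k : ℤ, gpdf s₁ (b * k) / Θ *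
        fZ Δ₁ Δ₂ (ρ - s₁ * s₂) (x - b * k) (y - s₂ / s₁ * (b * k))
        = (fXY ρ x y / Θ) * gpdf σ (mAux ρ s₁ s₂ x y - b * k) := by
      intro k
      rw [div_mul_eq_mul_div, hkey x y k]
      ring
    rw [tsum_congr hterm, tsum_mul_left, mul_comm b Θ, mul_comm b
      (∑' k : ℤ, gpdf σ (mAux ρ s₁ s₂ x y - b * k)), mul_div_mul_right _ _ hb.ne']
    ring
  -- the total mass identity: ∫ fXY · (b T(m)) = b Θ
  have hA : ∫⁻ p : ℝ × ℝ, ENNReal.ofReal (fXY ρ p.1 p.2 *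
      (b * ∑' k : ℤ, gpdf σ (mAux ρ s₁ s₂ p.1 p.2 - b * k))) = ENNReal.ofReal (b * Θ) := by
    have hpoint : ∀ p : ℝ × ℝ, ENNReal.ofReal (fXY ρ p.1 p.2 *
        (b * ∑' k : ℤ, gpdf σ (mAux ρ s₁ s₂ p.1 p.2 - b * k)))
        = ∑' k : ℤ, ENNReal.ofReal (b * (gpdf s₁ (b * k) *
            fZ Δ₁ Δ₂ (ρ - s₁ * s₂) (p.1 - b * k) (p.2 - s₂ / s₁ * (b * k)))) := by
      intro p
      have h1 : ∀ k : ℤ, b * (gpdf s₁ (b * k) *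
          fZ Δ₁ Δ₂ (ρ - s₁ * s₂) (p.1 - b * k) (p.2 - s₂ / s₁ * (b * k)))
          = (b * fXY ρ p.1 p.2) * gpdf σ (mAux ρ s₁ s₂ p.1 p.2 - b * k) := by
        intro k; rw [hkey p.1 p.2 k]; ring
      have hsum : Summable (fun k : ℤ => b * (gpdf s₁ (b * k) *
          fZ Δ₁ Δ₂ (ρ - s₁ * s₂) (p.1 - b * k) (p.2 - s₂ / s₁ * (b * k)))) := by
        refine Summable.congr (((summable_gpdf_shift hσpos hb
          (mAux ρ s₁ s₂ p.1 p.2)).mul_left (b * fXY ρ p.1 p.2))) (fun k => (h1 k).symm)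
      have hnn : ∀ k : ℤ, 0 ≤ b * (gpdf s₁ (b * k) *
          fZ Δ₁ Δ₂ (ρ - s₁ * s₂) (p.1 - b * k) (p.2 - s₂ / s₁ * (b * k))) := by
        intro k
        exact mul_nonneg hb.le (mul_nonneg (gpdf_nonneg hs₁pos _)
          (fZ_nonneg hpos (p.1 - b * k) (p.2 - s₂ / s₁ * (b * k))))
      rw [← ENNReal.ofReal_tsum_of_nonneg hnn hsum]
      congr 1
      rw [tsum_congr h1, tsum_mul_left]
      ring
    calc ∫⁻ p : ℝ × ℝ, ENNReal.ofReal (fXY ρ p.1 p.2 *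
          (b * ∑' k : ℤ, gpdf σ (mAux ρ s₁ s₂ p.1 p.2 - b * k)))
        = ∫⁻ p : ℝ × ℝ, ∑' k : ℤ, ENNReal.ofReal (b * (gpdf s₁ (b * k) *
            fZ Δ₁ Δ₂ (ρ - s₁ * s₂) (p.1 - b * k) (p.2 - s₂ / s₁ * (b * k)))) :=
          lintegral_congr hpoint
      _ = ∑' k : ℤ, ∫⁻ p : ℝ × ℝ, ENNReal.ofReal (b * (gpdf s₁ (b * k) *
            fZ Δ₁ Δ₂ (ρ - s₁ * s₂) (p.1 - b * k) (p.2 - s₂ / s₁ * (b * k)))) := by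
          refine lintegral_tsum (fun k => Measurable.aemeasurable ?_)
          apply ENNReal.measurable_ofReal.comp
          have hfZ : Continuous (fun p : ℝ × ℝ =>
              fZ Δ₁ Δ₂ (ρ - s₁ * s₂) (p.1 - b * k) (p.2 - s₂ / s₁ * (b * k))) := by
            unfold fZ; fun_prop
          exact (continuous_const.mul (continuous_const.mul hfZ)).measurable
      _ = ∑' k : ℤ, ENNReal.ofReal (b * gpdf s₁ (b * k)) := by
          refine tsum_congr (fun k => ?_)
          have hrw : ∀ p : ℝ × ℝ, b * (gpdf s₁ (b * k) *
              fZ Δ₁ Δ₂ (ρ - s₁ * s₂) (p.1 - b * k) (p.2 - s₂ / s₁ * (b * k)))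
              = (b * gpdf s₁ (b * k)) *
                fZ Δ₁ Δ₂ (ρ - s₁ * s₂) (p.1 - b * k) (p.2 - s₂ / s₁ * (b * k)) := by
            intro p; ring
          simp_rw [hrw, ENNReal.ofReal_mul (mul_nonneg hb.le (gpdf_nonneg hs₁pos (b * (k:ℝ))))]
          rw [lintegral_const_mul' _ _ ENNReal.ofReal_ne_top,
            lintegral_fZ_shift hΔ₁0 hpos ((b:ℝ) * k) (s₂ / s₁ * (b * k)), mul_one]
      _ = ENNReal.ofReal (b * Θ) := by
          rw [← ENNReal.ofReal_tsum_of_nonneg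
            (fun k : ℤ => mul_nonneg hb.le (gpdf_nonneg hs₁pos (b * (k:ℤ))))
            (hsumΘ.mul_left b), tsum_mul_left]
  -- bounds on b Θ
  have hΘub : b * Θ ≤ 1 + ε := by
    have hle : ∫⁻ p : ℝ × ℝ, ENNReal.ofReal (fXY ρ p.1 p.2 *
        (b * ∑' k : ℤ, gpdf σ (mAux ρ s₁ s₂ p.1 p.2 - b * k)))
        ≤ ∫⁻ p : ℝ × ℝ, ENNReal.ofReal ((1 + ε) * fXY ρ p.1 p.2) := by
      refine lintegral_mono (fun p => ENNReal.ofReal_le_ofReal ?_)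
      have h2 := (hT (mAux ρ s₁ s₂ p.1 p.2)).2
      have h3 := fXY_nonneg hρ2 p.1 p.2
      nlinarith
    rw [hA] at hle
    have : ∫⁻ p : ℝ × ℝ, ENNReal.ofReal ((1 + ε) * fXY ρ p.1 p.2)
        = ENNReal.ofReal (1 + ε) := by
      simp_rw [ENNReal.ofReal_mul (by linarith : (0:ℝ) ≤ 1 + ε)]
      rw [lintegral_const_mul' _ _ ENNReal.ofReal_ne_top, lintegral_fXY hρ2, mul_one]
    rw [this] at hle
    exact (ENNReal.ofReal_le_ofReal_iff (by linarith)).mp hle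
  have hΘlb : 1 - ε ≤ b * Θ := by
    have hle : ∫⁻ p : ℝ × ℝ, ENNReal.ofReal ((1 - ε) * fXY ρ p.1 p.2)
        ≤ ∫⁻ p : ℝ × ℝ, ENNReal.ofReal (fXY ρ p.1 p.2 *
          (b * ∑' k : ℤ, gpdf σ (mAux ρ s₁ s₂ p.1 p.2 - b * k))) := by
      refine lintegral_mono (fun p => ENNReal.ofReal_le_ofReal ?_)
      have h2 := (hT (mAux ρ s₁ s₂ p.1 p.2)).1
      have h3 := fXY_nonneg hρ2 p.1 p.2
      nlinarith
    rw [hA] at hle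
    have : ∫⁻ p : ℝ × ℝ, ENNReal.ofReal ((1 - ε) * fXY ρ p.1 p.2)
        = ENNReal.ofReal (1 - ε) := by
      simp_rw [ENNReal.ofReal_mul (by linarith : (0:ℝ) ≤ 1 - ε)]
      rw [lintegral_const_mul' _ _ ENNReal.ofReal_ne_top, lintegral_fXY hρ2, mul_one]
    rw [this] at hle
    exact (ENNReal.ofReal_le_ofReal_iff hbΘpos.le).mp hle
  -- pointwise bound
  have hptw : ∀ p : ℝ × ℝ, |fXbarYbar2 ρ Δ₁ Δ₂ b p.1 p.2 - fXY ρ p.1 p.2|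
      ≤ (4 * ε) * fXY ρ p.1 p.2 := by
    intro p
    rw [hbar p.1 p.2]
    set T : ℝ := b * ∑' k : ℤ, gpdf σ (mAux ρ s₁ s₂ p.1 p.2 - b * k) with hTdef
    have hT1 := (hT (mAux ρ s₁ s₂ p.1 p.2)).1
    have hT2 := (hT (mAux ρ s₁ s₂ p.1 p.2)).2
    have h3 := fXY_nonneg hρ2 p.1 p.2
    have key : fXY ρ p.1 p.2 * (T / (b * Θ)) - fXY ρ p.1 p.2
        = fXY ρ p.1 p.2 * ((T - b * Θ) / (b * Θ)) := by
      field_simp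
    rw [key, abs_mul, abs_of_nonneg h3, abs_div, abs_of_pos hbΘpos]
    have habs : |T - b * Θ| ≤ 2 * ε := by
      rw [abs_le]; constructor <;> linarith
    have hfrac : |T - b * Θ| / (b * Θ) ≤ 4 * ε := by
      rw [div_le_iff₀ hbΘpos]
      nlinarith
    nlinarith [mul_le_mul_of_nonneg_left hfrac h3]
  -- conclude
  calc ∫ p : ℝ × ℝ, |fXbarYbar2 ρ Δ₁ Δ₂ b p.1 p.2 - fXY ρ p.1 p.2|
      ≤ ∫ p : ℝ × ℝ, (4 * ε) * fXY ρ p.1 p.2 := by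
        refine integral_mono_of_nonneg (Filter.Eventually.of_forall (fun p => abs_nonneg _))
          ((integrable_fXY hρ2).const_mul (4 * ε)) (Filter.Eventually.of_forall hptw)
    _ = (4 * ε) * ∫ p : ℝ × ℝ, fXY ρ p.1 p.2 := MeasureTheory.integral_const_mul _ _
    _ = 4 * ε := by rw [integral_fXY hρ2, mul_one]
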